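/- Let A be a submodule of V and let s, s', s₀, s₀' ∈ V. The Hermitian inner product ⟨|A_{s,s'}⟩, |A_{s₀,s₀'}⟩⟩ equals 0 if and only if A + s ≠ A + s₀ or A^⊥ + s' ≠ A^⊥ + s₀'. (Equivalently: the two coset states are orthogonal if and only if the corresponding pair of cosets differ; when both cosets coincide the inner product is ±1.) -/

import Mathlib

open scoped BigOperators Kronecker Classical ComplexOrder

noncomputable section

/-- The vector space `F₂ⁿ`. -/
abbrev V (n : ℕ) : Type := Fin n → ZMod 2

/-- The standard bilinear pairing `⟨x,y⟩ = ∑ i, xᵢ * yᵢ` on `F₂ⁿ`. -/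
def pairing {n : ℕ} (x y : V n) : ZMod 2 := ∑ i, x i * y i

/-- `(−1)^b ∈ ℂ` for `b : ZMod 2`. -/
def sign (b : ZMod 2) : ℂ := if b = 0 then 1 else -1

lemma pairing_add_right {n : ℕ} (x y z : V n) :
    pairing x (y + z) = pairing x y + pairing x z := by
  simp [pairing, mul_add, Finset.sum_add_distrib]

lemma pairing_smul_right {n : ℕ} (c : ZMod 2) (x y : V n) :
    pairing x (c • y) = c * pairing x y := by
  simp only [pairing, Pi.smul_apply, smul_eq_mul, Finset.mul_sum]
  exact Finset.sum_congr rfl fun i _ => by ring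

/-- The orthogonal complement `A^⊥ = {y | ∀ a ∈ A, ⟨a,y⟩ = 0}`. -/
def perp {n : ℕ} (A : Submodule (ZMod 2) (V n)) : Submodule (ZMod 2) (V n) where
  carrier := {y | ∀ a ∈ A, pairing a y = 0}
  zero_mem' := by
    simp only [Set.mem_setOf_eq]
    intro a _
    simp [pairing]
  add_mem' := by
    intro y z hy hz
    simp only [Set.mem_setOf_eq] at *
    intro a ha
    rw [pairing_add_right, hy a ha, hz a ha, add_zero]
  smul_mem' := by
    intro c y hy
    simp only [Set.mem_setOf_eq] at *
    intro a ha
    rw [pairing_smul_right, hy a ha, mul_zero]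

/-- The coset `A + s = {a + s : a ∈ A}`. -/
def coset {n : ℕ} (A : Submodule (ZMod 2) (V n)) (s : V n) : Set (V n) :=
  {v | ∃ a ∈ A, v = a + s}

noncomputable instance {n : ℕ} (A : Submodule (ZMod 2) (V n)) : Fintype A :=
  Fintype.ofFinite _

/-- The coset state `|A_{s,s'}⟩ = |A|^{−1/2} ∑_{a ∈ A} (−1)^{⟨a,s'⟩} e_{a+s}`. -/
noncomputable def cosetState {n : ℕ} (A : Submodule (ZMod 2) (V n)) (s s' : V n) :
    EuclideanSpace ℂ (V n) :=
  ((Real.sqrt (Nat.card A) : ℂ))⁻¹ •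
    ∑ a : A, sign (pairing (a : V n) s') • EuclideanSpace.single ((a : V n) + s) (1 : ℂ)

/-- A family of orthogonal projections: each member is Hermitian and idempotent. -/
def IsProjFamily {ι m : Type*} [Fintype m] (P : ι → Matrix m m ℂ) : Prop :=
  ∀ p, (P p).IsHermitian ∧ P p * P p = P p

/-- Coset invariance of a family indexed by pairs `(s, s')`:
the value depends only on the pair of cosets `(A + s, A^⊥ + s')`. -/
def CosetInvariant {n : ℕ} {α : Type*} (A : Submodule (ZMod 2) (V n))
    (F : V n × V n → α) : Prop :=
  ∀ s₁ s₁' s₂ s₂' : V n, coset A s₁ = coset A s₂ →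
    coset (perp A) s₁' = coset (perp A) s₂' → F (s₁, s₁') = F (s₂, s₂')

/-- The rank-one matrix `|A_{s,s'}⟩⟨A_{s,s'}|`. -/
noncomputable def outer {n : ℕ} (A : Submodule (ZMod 2) (V n)) (s s' : V n) :
    Matrix (V n) (V n) ℂ :=
  Matrix.of fun x y => cosetState A s s' x * (starRingEnd ℂ) (cosetState A s s' y)

/-- `Π^A[P,Q] = 2^{−n} ∑_{s,s'} |A_{s,s'}⟩⟨A_{s,s'}| ⊗ P(s,s') ⊗ Q(s,s')`. -/
noncomputable def PiMat {n : ℕ} {I J : Type*} [Fintype I] [Fintype J]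
    (A : Submodule (ZMod 2) (V n)) (P : V n × V n → Matrix I I ℂ)
    (Q : V n × V n → Matrix J J ℂ) : Matrix (V n × I × J) (V n × I × J) ℂ :=
  ((2 : ℂ) ^ n)⁻¹ • ∑ s : V n, ∑ s' : V n, (outer A s s') ⊗ₖ (P (s, s') ⊗ₖ Q (s, s'))

/-- The `ℓ² → ℓ²` operator norm of a complex square matrix. -/
noncomputable def opNorm {m : Type*} [Fintype m] [DecidableEq m] (M : Matrix m m ℂ) : ℝ :=
  ‖Matrix.toEuclideanCLM (𝕜 := ℂ) M‖

lemma myAddSelf {n : ℕ} (x : V n) : x + x = 0 := by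
  funext i
  simp only [Pi.add_apply, Pi.zero_apply]
  exact CharTwo.add_self_eq_zero _

lemma mySignAdd (a b : ZMod 2) : sign (a + b) = sign a * sign b := by
  rcases (by decide : ∀ x : ZMod 2, x = 0 ∨ x = 1) a with rfl | rfl <;> rcases (by decide : ∀ x : ZMod 2, x = 0 ∨ x = 1) b with rfl | rfl <;>
    (simp only [show (1 + 1 : ZMod 2) = 0 from rfl, add_zero, zero_add]; norm_num [sign, show (1 : ZMod 2) ≠ 0 from by decide])

lemma mySignNeZero (a : ZMod 2) : sign a ≠ 0 := by
  rcases (by decide : ∀ x : ZMod 2, x = 0 ∨ x = 1) a with rfl | rfl <;> norm_num [sign, show (1 : ZMod 2) ≠ 0 from by decide]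

lemma myConjSign (a : ZMod 2) : (starRingEnd ℂ) (sign a) = sign a := by
  rcases (by decide : ∀ x : ZMod 2, x = 0 ∨ x = 1) a with rfl | rfl <;> norm_num [sign, show (1 : ZMod 2) ≠ 0 from by decide]

lemma myPairingAddLeft {n : ℕ} (x y z : V n) :
    pairing (x + y) z = pairing x z + pairing y z := by
  simp [pairing, add_mul, Finset.sum_add_distrib]

lemma myMemPerp {n : ℕ} {A : Submodule (ZMod 2) (V n)} {y : V n} :
    y ∈ perp A ↔ ∀ a ∈ A, pairing a y = 0 := Iff.rfl

lemma myCosetEq {n : ℕ} (A : Submodule (ZMod 2) (V n)) (s t : V n) :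
    coset A s = coset A t ↔ s + t ∈ A := by
  constructor
  · intro h
    have hs : s ∈ coset A s := ⟨0, A.zero_mem, (zero_add s).symm⟩
    rw [h] at hs
    obtain ⟨a, ha, hst⟩ := hs
    have : s + t = a := by rw [hst, add_assoc, myAddSelf, add_zero]
    rwa [this]
  · intro h
    ext v
    constructor
    · rintro ⟨a, ha, rfl⟩
      exact ⟨a + (s + t), A.add_mem ha h, by rw [add_assoc, add_assoc, myAddSelf, add_zero]⟩
    · rintro ⟨a, ha, rfl⟩
      refine ⟨a + (s + t), A.add_mem ha h, ?_⟩
      have hst : (s + t) + s = t := by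
        rw [add_comm s t, add_assoc, myAddSelf, add_zero]
      rw [add_assoc, hst]

lemma myCharSum {n : ℕ} (A : Submodule (ZMod 2) (V n)) (t : V n) (ht : t ∉ perp A) :
    ∑ a : A, sign (pairing (a : V n) t) = 0 := by
  rw [myMemPerp] at ht
  push_neg at ht
  obtain ⟨a₀, ha₀, hp⟩ := ht
  have h1 : pairing a₀ t = 1 := by
    have : ∀ x : ZMod 2, x ≠ 0 → x = 1 := by decide
    exact this _ hp
  have key : ∑ a : A, sign (pairing (a : V n) t)
      = ∑ a : A, sign (pairing ((⟨a₀, ha₀⟩ + a : A) : V n) t) :=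
    (Fintype.sum_equiv (Equiv.addLeft (⟨a₀, ha₀⟩ : A)) _ _ (fun a => rfl)).symm
  have key2 : ∀ a : A, sign (pairing ((⟨a₀, ha₀⟩ + a : A) : V n) t)
      = - sign (pairing (a : V n) t) := by
    intro a
    have : ((⟨a₀, ha₀⟩ + a : A) : V n) = a₀ + (a : V n) := rfl
    rw [this, myPairingAddLeft, h1, mySignAdd]
    have hs1 : sign 1 = -1 := by norm_num [sign]
    rw [hs1]
    ring
  rw [Finset.sum_congr rfl (fun a _ => key2 a), Finset.sum_neg_distrib] at key
  have := add_self_eq_zero.mp (by linear_combination key)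
  exact this

lemma mySumSubtypeIte {n : ℕ} (A : Submodule (ZMod 2) (V n)) (w u : V n) :
    ∑ b : A, (if (b : V n) = w then sign (pairing (b : V n) u) else 0)
      = if w ∈ A then sign (pairing w u) else 0 := by
  by_cases hw : w ∈ A
  · rw [if_pos hw, Finset.sum_eq_single (⟨w, hw⟩ : A)]
    · simp
    · intro b _ hb
      rw [if_neg]
      intro hbw
      exact hb (Subtype.ext hbw)
    · intro h
      exact absurd (Finset.mem_univ _) h
  · rw [if_neg hw]
    apply Finset.sum_eq_zero
    intro b _
    rw [if_neg]
    intro hbw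
    exact hw (hbw ▸ b.2)

lemma myCardPos {n : ℕ} (A : Submodule (ZMod 2) (V n)) : 0 < Nat.card A :=
  Nat.card_pos

/-- Two coset states for the same subspace are orthogonal iff the corresponding
pairs of cosets differ. -/
theorem cosetState_inner_eq_zero_iff
    {n : ℕ} (hn : 0 < n) (A : Submodule (ZMod 2) (V n)) (s s' s₀ s₀' : V n) :
    (inner ℂ (cosetState A s s') (cosetState A s₀ s₀') : ℂ) = 0 ↔
      coset A s ≠ coset A s₀ ∨ coset (perp A) s' ≠ coset (perp A) s₀' := by
  classical
  set N := Nat.card A with hN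
  set c : ℂ := ((Real.sqrt N : ℝ) : ℂ) with hc
  have hNpos : 0 < N := myCardPos A
  have hcne : c ≠ 0 := by
    simp only [hc, Complex.ofReal_ne_zero]
    positivity
  have hcconj : (starRingEnd ℂ) c⁻¹ = c⁻¹ := by
    simp [hc, ← Complex.ofReal_inv]
  have hcsq : c⁻¹ * c⁻¹ * (N : ℂ) = 1 := by
    have : c * c = (N : ℂ) := by
      rw [hc, ← Complex.ofReal_mul, Real.mul_self_sqrt (by positivity)]
      norm_num
    field_simp [this]
    linear_combination -this
  -- expand the inner product
  have expand : (inner ℂ (cosetState A s s') (cosetState A s₀ s₀') : ℂ) =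
      c⁻¹ * c⁻¹ * ∑ a : A, ∑ b : A,
        sign (pairing (a : V n) s') * sign (pairing (b : V n) s₀') *
          (if (b : V n) = (a : V n) + (s + s₀) then 1 else 0) := by
    simp only [cosetState, inner_smul_left, inner_smul_right, sum_inner, inner_sum,
      inner_smul_left, inner_smul_right, EuclideanSpace.inner_single_left,
      EuclideanSpace.single_apply, myConjSign, map_one, mul_one, hcconj, ← hN, ← hc,
      Finset.mul_sum]
    rw [Finset.sum_comm]
    refine Finset.sum_congr rfl fun a _ => Finset.sum_congr rfl fun b _ => ?_
    have hcond : ((a : V n) + s = (b : V n) + s₀) ↔ ((b : V n) = (a : V n) + (s + s₀)) := by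
      constructor
      · intro h
        have h2 : ((a : V n) + s) + s₀ = (b : V n) := by
          rw [h, add_assoc, myAddSelf, add_zero]
        rw [← h2, add_assoc]
      · intro h
        rw [h, add_assoc ((a : V n)) (s + s₀) s₀, add_assoc s s₀ s₀, myAddSelf, add_zero]
    by_cases h : (a : V n) + s = (b : V n) + s₀
    · rw [if_pos h, if_pos (hcond.mp h)]
      ring
    · rw [if_neg h, if_neg (fun hb => h (hcond.mpr hb))]
      ring
  -- collapse the inner sum over b
  have collapse : ∀ a : A, ∑ b : A,
      sign (pairing (a : V n) s') * sign (pairing (b : V n) s₀') *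
        (if (b : V n) = (a : V n) + (s + s₀) then 1 else 0)
      = sign (pairing (a : V n) s') *
          (if (a : V n) + (s + s₀) ∈ A then sign (pairing ((a : V n) + (s + s₀)) s₀') else 0) := by
    intro a
    have h1 : (∑ b : A,
        sign (pairing (a : V n) s') * sign (pairing (b : V n) s₀') *
          (if (b : V n) = (a : V n) + (s + s₀) then 1 else 0))
        = sign (pairing (a : V n) s') * ∑ b : A,
            (if (b : V n) = (a : V n) + (s + s₀) then sign (pairing (b : V n) s₀') else 0) := by
      rw [Finset.mul_sum]
      exact Finset.sum_congr rfl fun b _ => by split_ifs <;> ring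
    rw [h1, mySumSubtypeIte]
  rw [expand]
  simp only [collapse]
  by_cases hd : s + s₀ ∈ A
  · -- cosets of A equal
    have hAd : ∀ a : A, (a : V n) + (s + s₀) ∈ A := fun a => A.add_mem a.2 hd
    have hterm : ∀ a : A, sign (pairing (a : V n) s') *
        (if (a : V n) + (s + s₀) ∈ A then sign (pairing ((a : V n) + (s + s₀)) s₀') else 0)
        = sign (pairing (s + s₀) s₀') * sign (pairing (a : V n) (s' + s₀')) := by
      intro a
      rw [if_pos (hAd a), myPairingAddLeft, mySignAdd, pairing_add_right, mySignAdd]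
      ring
    simp only [hterm, ← Finset.mul_sum]
    by_cases hd' : s' + s₀' ∈ perp A
    · -- both cosets equal: inner = ±1 ≠ 0
      have hsum : ∑ a : A, sign (pairing (a : V n) (s' + s₀')) = (N : ℂ) := by
        have : ∀ a : A, sign (pairing (a : V n) (s' + s₀')) = 1 := by
          intro a
          rw [hd' (a : V n) a.2]
          simp [sign]
        rw [Finset.sum_congr rfl (fun a _ => this a)]
        simp [hN, Nat.card_eq_fintype_card]
      rw [hsum]
      constructor
      · intro h
        exfalso
        apply mySignNeZero (pairing (s + s₀) s₀')
        have : c⁻¹ * c⁻¹ * (sign (pairing (s + s₀) s₀') * (N : ℂ)) = 0 := h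
        have h2 : (c⁻¹ * c⁻¹ * (N : ℂ)) * sign (pairing (s + s₀) s₀') = 0 := by
          linear_combination this
        rw [hcsq, one_mul] at h2
        exact h2
      · intro h
        exfalso
        rcases h with h | h
        · exact h ((myCosetEq A s s₀).mpr hd)
        · exact h ((myCosetEq (perp A) s' s₀').mpr hd')
    · -- dual cosets differ: character sum vanishes
      rw [myCharSum A _ hd']
      simp only [mul_zero, eq_self_iff_true, true_iff]
      right
      intro h
      exact hd' ((myCosetEq (perp A) s' s₀').mp h)
  · -- cosets of A differ: every term vanishes
    have hterm : ∀ a : A, sign (pairing (a : V n) s') *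
        (if (a : V n) + (s + s₀) ∈ A then sign (pairing ((a : V n) + (s + s₀)) s₀') else 0)
        = 0 := by
      intro a
      rw [if_neg, mul_zero]
      intro h
      apply hd
      have : (s + s₀) = (a : V n) + ((a : V n) + (s + s₀)) := by
        rw [← add_assoc, myAddSelf, zero_add]
      rw [this]
      exact A.add_mem a.2 h
    simp only [hterm, Finset.sum_const_zero, mul_zero, eq_self_iff_true, true_iff]
    left
    intro h
    exact hd ((myCosetEq A s s₀).mp h)
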